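/- Let D ⊆ ℝ² be open and connected, l : D → ℝ⁴ a smooth isothermal parametrization of a minimal surface in S³ (⟨l,l⟩ = 1, ⟨l_u,l_u⟩ = ⟨l_v,l_v⟩ = E > 0, ⟨l_u,l_v⟩ = 0, Δl + 2E·l = 0), n : D → ℝ⁴ a smooth unit normal (⟨n,n⟩ = 1, ⟨n,l⟩ = ⟨n,l_u⟩ = ⟨n,l_v⟩ = 0), and a = ⟨l_{uu}, n⟩, b = ⟨l_{uv}, n⟩. Then on D the identity a² + b² = (1/2)ΔE − (E_u² + E_v²)/(2E) + E² holds. -/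

import Mathlib

open Real
open scoped InnerProductSpace

noncomputable section

/-- ℝ⁴ with the standard Euclidean inner product. -/
abbrev E4 := EuclideanSpace ℝ (Fin 4)

/-- Partial derivative with respect to the first parameter. -/
def pu {F : Type*} [NormedAddCommGroup F] [NormedSpace ℝ F]
    (f : ℝ × ℝ → F) (p : ℝ × ℝ) : F := fderiv ℝ f p (1, 0)

/-- Partial derivative with respect to the second parameter. -/
def pv {F : Type*} [NormedAddCommGroup F] [NormedSpace ℝ F]
    (f : ℝ × ℝ → F) (p : ℝ × ℝ) : F := fderiv ℝ f p (0, 1)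

variable {F : Type*} [NormedAddCommGroup F] [NormedSpace ℝ F]
variable {D : Set (ℝ × ℝ)} {p : ℝ × ℝ}

lemma diffAt (hD : IsOpen D) {f : ℝ × ℝ → F} (hf : ContDiffOn ℝ (⊤ : ℕ∞) f D)
    (hp : p ∈ D) : DifferentiableAt ℝ f p :=
  (hf.contDiffAt (hD.mem_nhds hp)).differentiableAt (by simp)

lemma pu_congr (hD : IsOpen D) {f g : ℝ × ℝ → F} (h : ∀ q ∈ D, f q = g q) (hp : p ∈ D) :
    pu f p = pu g p := by
  unfold pu
  rw [Filter.EventuallyEq.fderiv_eq (by filter_upwards [hD.mem_nhds hp] with q hq using h q hq)]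

lemma pv_congr (hD : IsOpen D) {f g : ℝ × ℝ → F} (h : ∀ q ∈ D, f q = g q) (hp : p ∈ D) :
    pv f p = pv g p := by
  unfold pv
  rw [Filter.EventuallyEq.fderiv_eq (by filter_upwards [hD.mem_nhds hp] with q hq using h q hq)]

lemma contDiffOn_pu (hD : IsOpen D) {f : ℝ × ℝ → F} (hf : ContDiffOn ℝ (⊤ : ℕ∞) f D) :
    ContDiffOn ℝ (⊤ : ℕ∞) (pu f) D := by
  have h := hf.fderiv_of_isOpen hD (m := (⊤ : ℕ∞)) (by simp)
  exact h.clm_apply contDiffOn_const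

lemma contDiffOn_pv (hD : IsOpen D) {f : ℝ × ℝ → F} (hf : ContDiffOn ℝ (⊤ : ℕ∞) f D) :
    ContDiffOn ℝ (⊤ : ℕ∞) (pv f) D := by
  have h := hf.fderiv_of_isOpen hD (m := (⊤ : ℕ∞)) (by simp)
  exact h.clm_apply contDiffOn_const

lemma pu_pv_comm (hD : IsOpen D) {f : ℝ × ℝ → F} (hf : ContDiffOn ℝ (⊤ : ℕ∞) f D)
    (hp : p ∈ D) : pu (pv f) p = pv (pu f) p := by
  have hfa : ContDiffAt ℝ (⊤ : ℕ∞) f p := hf.contDiffAt (hD.mem_nhds hp)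
  have hsymm : IsSymmSndFDerivAt ℝ f p := hfa.isSymmSndFDerivAt (by simp; exact WithTop.coe_le_coe.2 le_top)
  have hd : DifferentiableAt ℝ (fderiv ℝ f) p := by
    have := hfa.fderiv_right (m := (⊤ : ℕ∞)) (by simp)
    exact this.differentiableAt (by simp)
  have h1 : ∀ v w : ℝ × ℝ, fderiv ℝ (fun q => fderiv ℝ f q w) p v
      = fderiv ℝ (fderiv ℝ f) p v w := by
    intro v w
    rw [fderiv_clm_apply hd (differentiableAt_const w)]
    simp
  show fderiv ℝ (fun q => fderiv ℝ f q (0,1)) p (1,0) = fderiv ℝ (fun q => fderiv ℝ f q (1,0)) p (0,1)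
  rw [h1, h1, hsymm.eq]

lemma pu_const (c : ℝ) : pu (fun _ : ℝ × ℝ => c) p = 0 := by
  unfold pu; rw [fderiv_fun_const]; simp

lemma pv_const (c : ℝ) : pv (fun _ : ℝ × ℝ => c) p = 0 := by
  unfold pv; rw [fderiv_fun_const]; simp

lemma pu_inner_eqOn (hD : IsOpen D) {f g : ℝ × ℝ → E4} {c : ℝ × ℝ → ℝ}
    (hf : ContDiffOn ℝ (⊤ : ℕ∞) f D) (hg : ContDiffOn ℝ (⊤ : ℕ∞) g D)
    (hc : ∀ q ∈ D, ⟪f q, g q⟫_ℝ = c q) (hp : p ∈ D) :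
    pu c p = ⟪f p, pu g p⟫_ℝ + ⟪pu f p, g p⟫_ℝ := by
  rw [pu_congr hD (f := c) (g := fun q => ⟪f q, g q⟫_ℝ) (fun q hq => (hc q hq).symm) hp]
  exact fderiv_inner_apply ℝ (diffAt hD hf hp) (diffAt hD hg hp) (1, 0)

lemma pv_inner_eqOn (hD : IsOpen D) {f g : ℝ × ℝ → E4} {c : ℝ × ℝ → ℝ}
    (hf : ContDiffOn ℝ (⊤ : ℕ∞) f D) (hg : ContDiffOn ℝ (⊤ : ℕ∞) g D)
    (hc : ∀ q ∈ D, ⟪f q, g q⟫_ℝ = c q) (hp : p ∈ D) :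
    pv c p = ⟪f p, pv g p⟫_ℝ + ⟪pv f p, g p⟫_ℝ := by
  rw [pv_congr hD (f := c) (g := fun q => ⟪f q, g q⟫_ℝ) (fun q hq => (hc q hq).symm) hp]
  exact fderiv_inner_apply ℝ (diffAt hD hf hp) (diffAt hD hg hp) (0, 1)

lemma pu_inner2_eqOn (hD : IsOpen D) {f g h k : ℝ × ℝ → E4} {c : ℝ × ℝ → ℝ}
    (hf : ContDiffOn ℝ (⊤ : ℕ∞) f D) (hg : ContDiffOn ℝ (⊤ : ℕ∞) g D)
    (hh : ContDiffOn ℝ (⊤ : ℕ∞) h D) (hk : ContDiffOn ℝ (⊤ : ℕ∞) k D)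
    (hc : ∀ q ∈ D, c q = ⟪f q, g q⟫_ℝ + ⟪h q, k q⟫_ℝ) (hp : p ∈ D) :
    pu c p = ⟪f p, pu g p⟫_ℝ + ⟪pu f p, g p⟫_ℝ + ⟪h p, pu k p⟫_ℝ + ⟪pu h p, k p⟫_ℝ := by
  rw [pu_congr hD (f := c) (g := fun q => ⟪f q, g q⟫_ℝ + ⟪h q, k q⟫_ℝ) hc hp]
  unfold pu
  have d1 : DifferentiableAt ℝ (fun q => ⟪f q, g q⟫_ℝ) p :=
    (diffAt hD hf hp).inner ℝ (diffAt hD hg hp)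
  have d2 : DifferentiableAt ℝ (fun q => ⟪h q, k q⟫_ℝ) p :=
    (diffAt hD hh hp).inner ℝ (diffAt hD hk hp)
  rw [fderiv_fun_add d1 d2]
  have e1 := fderiv_inner_apply ℝ (diffAt hD hf hp) (diffAt hD hg hp) ((1:ℝ), (0:ℝ))
  have e2 := fderiv_inner_apply ℝ (diffAt hD hh hp) (diffAt hD hk hp) ((1:ℝ), (0:ℝ))
  simp only [ContinuousLinearMap.add_apply]
  rw [e1, e2]; ring

lemma pv_inner2_eqOn (hD : IsOpen D) {f g h k : ℝ × ℝ → E4} {c : ℝ × ℝ → ℝ}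
    (hf : ContDiffOn ℝ (⊤ : ℕ∞) f D) (hg : ContDiffOn ℝ (⊤ : ℕ∞) g D)
    (hh : ContDiffOn ℝ (⊤ : ℕ∞) h D) (hk : ContDiffOn ℝ (⊤ : ℕ∞) k D)
    (hc : ∀ q ∈ D, c q = ⟪f q, g q⟫_ℝ + ⟪h q, k q⟫_ℝ) (hp : p ∈ D) :
    pv c p = ⟪f p, pv g p⟫_ℝ + ⟪pv f p, g p⟫_ℝ + ⟪h p, pv k p⟫_ℝ + ⟪pv h p, k p⟫_ℝ := by
  rw [pv_congr hD (f := c) (g := fun q => ⟪f q, g q⟫_ℝ + ⟪h q, k q⟫_ℝ) hc hp]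
  unfold pv
  have d1 : DifferentiableAt ℝ (fun q => ⟪f q, g q⟫_ℝ) p :=
    (diffAt hD hf hp).inner ℝ (diffAt hD hg hp)
  have d2 : DifferentiableAt ℝ (fun q => ⟪h q, k q⟫_ℝ) p :=
    (diffAt hD hh hp).inner ℝ (diffAt hD hk hp)
  rw [fderiv_fun_add d1 d2]
  have e1 := fderiv_inner_apply ℝ (diffAt hD hf hp) (diffAt hD hg hp) ((0:ℝ), (1:ℝ))
  have e2 := fderiv_inner_apply ℝ (diffAt hD hh hp) (diffAt hD hk hp) ((0:ℝ), (1:ℝ))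
  simp only [ContinuousLinearMap.add_apply]
  rw [e1, e2]; ring

lemma pu_add_add_smul (hD : IsOpen D) {f g h : ℝ × ℝ → E4} {c : ℝ × ℝ → ℝ}
    (hf : ContDiffOn ℝ (⊤ : ℕ∞) f D) (hg : ContDiffOn ℝ (⊤ : ℕ∞) g D)
    (hh : ContDiffOn ℝ (⊤ : ℕ∞) h D) (hc : ContDiffOn ℝ (⊤ : ℕ∞) c D) (hp : p ∈ D) :
    pu (fun q => f q + g q + c q • h q) p
      = pu f p + pu g p + (pu c p • h p + c p • pu h p) := by
  unfold pu
  have d1 := diffAt hD hf hp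
  have d2 := diffAt hD hg hp
  have d3 := diffAt hD hh hp
  have d4 := diffAt hD hc hp
  rw [fderiv_fun_add (d1.fun_add d2) (d4.fun_smul d3), fderiv_fun_add d1 d2, fderiv_fun_smul d4 d3]
  simp only [ContinuousLinearMap.add_apply, ContinuousLinearMap.smul_apply,
    ContinuousLinearMap.smulRight_apply]
  module

lemma parseval4 {e : Fin 4 → E4} (h : Orthonormal ℝ e) (w : E4) :
    ⟪w, w⟫_ℝ = ⟪w, e 0⟫_ℝ ^ 2 + ⟪w, e 1⟫_ℝ ^ 2 + ⟪w, e 2⟫_ℝ ^ 2 + ⟪w, e 3⟫_ℝ ^ 2 := by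
  have hcard : Fintype.card (Fin 4) = Module.finrank ℝ E4 := by simp
  let bb := basisOfOrthonormalOfCardEqFinrank h hcard
  have hbb : ⇑bb = e := coe_basisOfOrthonormalOfCardEqFinrank h hcard
  have h2 : Orthonormal ℝ ⇑bb := by rwa [hbb]
  let ob := bb.toOrthonormalBasis h2
  have hob : ⇑ob = e := by rw [Module.Basis.coe_toOrthonormalBasis, hbb]
  have hsum := ob.sum_inner_mul_inner w w
  rw [Fin.sum_univ_four, hob] at hsum
  rw [← hsum]
  have : ∀ i : Fin 4, ⟪w, e i⟫_ℝ * ⟪e i, w⟫_ℝ = ⟪w, e i⟫_ℝ ^ 2 := by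
    intro i; rw [real_inner_comm (e i) w]; ring
  rw [this 0, this 1, this 2, this 3]

/-- for a minimal surface in `S³` in isothermal parameters with unit normal `n`
and `a = ⟨l_{uu}, n⟩`, `b = ⟨l_{uv}, n⟩`, the identity
`a² + b² = (1/2)ΔE − (E_u² + E_v²)/(2E) + E²` holds on `D`. -/
theorem stmt_2 (D : Set (ℝ × ℝ)) (hD : IsOpen D) (hDconn : IsConnected D)
    (E : ℝ × ℝ → ℝ) (l n : ℝ × ℝ → E4)
    (hE : ContDiffOn ℝ (⊤ : ℕ∞) E D) (hEpos : ∀ p ∈ D, 0 < E p)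
    (hl : ContDiffOn ℝ (⊤ : ℕ∞) l D) (hn : ContDiffOn ℝ (⊤ : ℕ∞) n D)
    (hunit : ∀ p ∈ D, ⟪l p, l p⟫_ℝ = 1)
    (hEu : ∀ p ∈ D, ⟪pu l p, pu l p⟫_ℝ = E p)
    (hEv : ∀ p ∈ D, ⟪pv l p, pv l p⟫_ℝ = E p)
    (hF : ∀ p ∈ D, ⟪pu l p, pv l p⟫_ℝ = 0)
    (hmin : ∀ p ∈ D, pu (pu l) p + pv (pv l) p + (2 * E p) • l p = 0)
    (hn1 : ∀ p ∈ D, ⟪n p, n p⟫_ℝ = 1)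
    (hnl : ∀ p ∈ D, ⟪n p, l p⟫_ℝ = 0)
    (hnu : ∀ p ∈ D, ⟪n p, pu l p⟫_ℝ = 0)
    (hnv : ∀ p ∈ D, ⟪n p, pv l p⟫_ℝ = 0)
    (a b : ℝ × ℝ → ℝ)
    (ha : ∀ p, a p = ⟪pu (pu l) p, n p⟫_ℝ)
    (hb : ∀ p, b p = ⟪pv (pu l) p, n p⟫_ℝ) :
    ∀ p ∈ D,
      (a p) ^ 2 + (b p) ^ 2 =
        (1 / 2) * (pu (pu E) p + pv (pv E) p)
          - ((pu E p) ^ 2 + (pv E p) ^ 2) / (2 * E p) + (E p) ^ 2 := by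
  -- smoothness of derivatives
  have hlu : ContDiffOn ℝ (⊤ : ℕ∞) (pu l) D := contDiffOn_pu hD hl
  have hlv : ContDiffOn ℝ (⊤ : ℕ∞) (pv l) D := contDiffOn_pv hD hl
  have hluu : ContDiffOn ℝ (⊤ : ℕ∞) (pu (pu l)) D := contDiffOn_pu hD hlu
  have hluv : ContDiffOn ℝ (⊤ : ℕ∞) (pv (pu l)) D := contDiffOn_pv hD hlu
  have hlvv : ContDiffOn ℝ (⊤ : ℕ∞) (pv (pv l)) D := contDiffOn_pv hD hlv
  have hE1 : ContDiffOn ℝ (⊤ : ℕ∞) (pu E) D := contDiffOn_pu hD hE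
  have hE2 : ContDiffOn ℝ (⊤ : ℕ∞) (pv E) D := contDiffOn_pv hD hE
  -- first-order identities valid on all of D
  have hA_u : ∀ q ∈ D, ⟪pu l q, l q⟫_ℝ = 0 := by
    intro q hq
    have h := pu_inner_eqOn hD hl hl hunit hq
    rw [pu_const] at h
    have hc := real_inner_comm (l q) (pu l q)
    linarith
  have hA_v : ∀ q ∈ D, ⟪pv l q, l q⟫_ℝ = 0 := by
    intro q hq
    have h := pv_inner_eqOn hD hl hl hunit hq
    rw [pv_const] at h
    have hc := real_inner_comm (l q) (pv l q)
    linarith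
  have hcomm : ∀ q ∈ D, pu (pv l) q = pv (pu l) q := fun q hq => pu_pv_comm hD hl hq
  have hC1 : ∀ q ∈ D, pu E q = ⟪pu l q, pu (pu l) q⟫_ℝ + ⟪pu (pu l) q, pu l q⟫_ℝ :=
    fun q hq => pu_inner_eqOn hD hlu hlu hEu hq
  have hC2 : ∀ q ∈ D, pv E q = ⟪pu l q, pv (pu l) q⟫_ℝ + ⟪pv (pu l) q, pu l q⟫_ℝ :=
    fun q hq => pv_inner_eqOn hD hlu hlu hEu hq
  -- now fix the point
  intro p hp
  have hEp : 0 < E p := hEpos p hp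
  have hEne : E p ≠ 0 := ne_of_gt hEp
  -- scalar second-order inner products at p
  have hC1' : ⟪pu (pu l) p, pu l p⟫_ℝ = pu E p / 2 := by
    have h := hC1 p hp
    have hc := real_inner_comm (pu l p) (pu (pu l) p)
    linarith
  have hC2' : ⟪pv (pu l) p, pu l p⟫_ℝ = pv E p / 2 := by
    have h := hC2 p hp
    have hc := real_inner_comm (pu l p) (pv (pu l) p)
    linarith
  have hD1 : ⟪pv (pu l) p, pv l p⟫_ℝ = pu E p / 2 := by
    have h := pu_inner_eqOn hD hlv hlv hEv hp
    rw [hcomm p hp] at h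
    have hc := real_inner_comm (pv l p) (pv (pu l) p)
    linarith
  have hD2 : ⟪pu (pu l) p, pv l p⟫_ℝ = -(pv E p) / 2 := by
    have h := pu_inner_eqOn hD hlu hlv hF hp
    rw [pu_const, hcomm p hp] at h
    have hc := real_inner_comm (pu l p) (pv (pu l) p)
    linarith
  have hB1 : ⟪pu (pu l) p, l p⟫_ℝ = -(E p) := by
    have h := pu_inner_eqOn hD hlu hl hA_u hp
    rw [pu_const] at h
    have h2 := hEu p hp
    linarith
  have hB2 : ⟪pv (pu l) p, l p⟫_ℝ = 0 := by
    have h := pv_inner_eqOn hD hlu hl hA_u hp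
    rw [pv_const] at h
    have h2 := hF p hp
    linarith
  -- orthonormal frame at p
  set s : ℝ := Real.sqrt (E p) with hsdef
  have hs : s * s = E p := Real.mul_self_sqrt hEp.le
  have hsne : s ≠ 0 := by
    intro h0
    rw [h0, mul_zero] at hs
    exact hEne hs.symm
  set e : Fin 4 → E4 := ![l p, s⁻¹ • pu l p, s⁻¹ • pv l p, n p] with hedef
  have honb : Orthonormal ℝ e := by
    rw [orthonormal_iff_ite]
    intro i j
    have h1 := hunit p hp
    have h2 := hEu p hp
    have h3 := hEv p hp
    have h4 := hF p hp
    have h5 := hn1 p hp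
    have h6 := hnl p hp
    have h7 := hnu p hp
    have h8 := hnv p hp
    have h9 := hA_u p hp
    have h10 := hA_v p hp
    have h4' : ⟪pv l p, pu l p⟫_ℝ = 0 := by rw [real_inner_comm]; exact h4
    have h6' : ⟪l p, n p⟫_ℝ = 0 := by rw [real_inner_comm]; exact h6
    have h7' : ⟪pu l p, n p⟫_ℝ = 0 := by rw [real_inner_comm]; exact h7
    have h8' : ⟪pv l p, n p⟫_ℝ = 0 := by rw [real_inner_comm]; exact h8
    have h9' : ⟪l p, pu l p⟫_ℝ = 0 := by rw [real_inner_comm]; exact h9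
    have h10' : ⟪l p, pv l p⟫_ℝ = 0 := by rw [real_inner_comm]; exact h10
    have hinv : s⁻¹ * (s⁻¹ * E p) = 1 := by
      rw [← hs]; field_simp
    fin_cases i <;> fin_cases j <;>
      simp only [hedef, Matrix.cons_val_zero, Matrix.cons_val_one, Matrix.head_cons,
        Matrix.cons_val_two, Matrix.tail_cons, Matrix.cons_val_three,
        real_inner_smul_left, real_inner_smul_right,
        h1, h2, h3, h4, h5, h6, h7, h8, h9, h10, h4', h6', h7', h8', h9', h10', hinv,
        mul_zero, mul_one, Fin.isValue, Fin.zero_eta, Fin.mk_one, Fin.reduceEq, reduceIte, Fin.reduceFinMk,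
        if_true, if_false]
  -- Parseval for l_uu and l_uv
  have he0 : e 0 = l p := rfl
  have he1 : e 1 = s⁻¹ • pu l p := rfl
  have he2 : e 2 = s⁻¹ • pv l p := rfl
  have he3 : e 3 = n p := rfl
  have hsqi : (s⁻¹) ^ 2 = (E p)⁻¹ := by
    rw [inv_pow, sq, hs]
  have hNuu : ⟪pu (pu l) p, pu (pu l) p⟫_ℝ
      = (E p) ^ 2 + (pu E p) ^ 2 / (4 * E p) + (pv E p) ^ 2 / (4 * E p) + (a p) ^ 2 := by
    have h := parseval4 honb (pu (pu l) p)
    rw [he0, he1, he2, he3, real_inner_smul_right, real_inner_smul_right,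
      hB1, hC1', hD2, ← ha p] at h
    rw [h, mul_pow, mul_pow, hsqi]
    field_simp
    ring
  have hNuv : ⟪pv (pu l) p, pv (pu l) p⟫_ℝ
      = (pv E p) ^ 2 / (4 * E p) + (pu E p) ^ 2 / (4 * E p) + (b p) ^ 2 := by
    have h := parseval4 honb (pv (pu l) p)
    rw [he0, he1, he2, he3, real_inner_smul_right, real_inner_smul_right,
      hB2, hC2', hD1, ← hb p] at h
    rw [h, mul_pow, mul_pow, hsqi]
    field_simp
    ring
  -- second derivatives of E
  have hpuuE : pu (pu E) p
      = ⟪pu l p, pu (pu (pu l)) p⟫_ℝ + ⟪pu (pu l) p, pu (pu l) p⟫_ℝ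
        + ⟪pu (pu l) p, pu (pu l) p⟫_ℝ + ⟪pu (pu (pu l)) p, pu l p⟫_ℝ :=
    pu_inner2_eqOn hD hlu hluu hluu hlu hC1 hp
  have hpvvE : pv (pv E) p
      = ⟪pu l p, pv (pv (pu l)) p⟫_ℝ + ⟪pv (pu l) p, pv (pu l) p⟫_ℝ
        + ⟪pv (pu l) p, pv (pu l) p⟫_ℝ + ⟪pv (pv (pu l)) p, pu l p⟫_ℝ :=
    pv_inner2_eqOn hD hlu hluv hluv hlu hC2 hp
  -- derivative of the minimality equation
  have hmin' : pu (fun q => pu (pu l) q + pv (pv l) q + (2 * E q) • l q) p = 0 := by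
    rw [pu_congr hD (g := fun _ => (0 : E4)) (fun q hq => hmin q hq) hp]
    unfold pu; rw [fderiv_fun_const]; simp
  have h2E : ContDiffOn ℝ (⊤ : ℕ∞) (fun q => 2 * E q) D := by
    exact (contDiffOn_const (c := (2:ℝ))).mul hE
  have hminD := pu_add_add_smul hD hluu hlvv hl h2E hp
  rw [hmin'] at hminD
  have hpu2E : pu (fun q => 2 * E q) p = 2 * pu E p := by
    unfold pu
    rw [fderiv_const_mul (diffAt hD hE hp) 2]
    simp [pu]
  rw [hpu2E] at hminD
  -- commutation of third derivatives
  have hthird : pu (pv (pv l)) p = pv (pv (pu l)) p := by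
    rw [pu_pv_comm hD hlv hp]
    exact pv_congr hD (fun q hq => (hcomm q hq).symm) hp ▸
      pv_congr hD (f := pv (pu l)) (g := pv (pu l)) (fun _ _ => rfl) hp
  -- inner product of the differentiated minimality equation with l_u
  have h9' : ⟪l p, pu l p⟫_ℝ = 0 := by rw [real_inner_comm]; exact hA_u p hp
  have hXY : ⟪pu (pu (pu l)) p, pu l p⟫_ℝ + ⟪pv (pv (pu l)) p, pu l p⟫_ℝ
      = -2 * (E p) ^ 2 := by
    have hX := congrArg (fun w : E4 => ⟪w, pu l p⟫_ℝ) hminD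
    simp only [inner_zero_left, inner_add_left, real_inner_smul_left, hthird, h9',
      hEu p hp, mul_zero, zero_add, add_zero] at hX
    linear_combination -hX
  -- conclude
  have hcommX : ⟪pu l p, pu (pu (pu l)) p⟫_ℝ = ⟪pu (pu (pu l)) p, pu l p⟫_ℝ :=
    real_inner_comm _ _
  have hcommY : ⟪pu l p, pv (pv (pu l)) p⟫_ℝ = ⟪pv (pv (pu l)) p, pu l p⟫_ℝ :=
    real_inner_comm _ _
  rw [hcommX, hNuu] at hpuuE
  rw [hcommY, hNuv] at hpvvE
  rw [hpuuE, hpvvE]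
  linear_combination -hXY
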